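/- arXiv:2204.03436 — 2 statements merged into one kernel-verified Lean document; each statement's English description precedes it below -/
import Mathlib

section
/- Under Assumptions A1–A7 (with AXR), for every λ ∈ Λ* the pseudo-energy identity ‖S λ‖²_{M^{-1}} + 4p = ‖λ‖²_{M^{-1}} holds, where v := Ã^{-1} T^⊤ λ and p := ⟨A v, v̄⟩ in the coercive case (α = 1) or p := Im⟨A v, v̄⟩ in the wave propagation case (α = i); moreover p ≥ 0, so the scattering operator S is non-expansive with respect to ‖·‖_{M^{-1}}: ‖S λ‖_{M^{-1}} ≤ ‖λ‖_{M^{-1}} for all λ ∈ Λ*. -/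
/-- The transpose (dual map) `B^⊤ : Y* → X*` of a bounded linear operator `B : X → Y`. -/
noncomputable def trOp {X Y : Type*} [NormedAddCommGroup X] [NormedSpace ℂ X]
    [NormedAddCommGroup Y] [NormedSpace ℂ Y] (B : X →L[ℂ] Y) :
    (Y →L[ℂ] ℂ) →L[ℂ] (X →L[ℂ] ℂ) :=
  (ContinuousLinearMap.compL ℂ X Y ℂ).flip B

/-- `B` (an operator into the dual) is *real-valued* with respect to the conjugation `cU`:
`⟨B v̄, w⟩ = conj ⟨B v, w̄⟩`. -/
def IsRealForm {U : Type*} [NormedAddCommGroup U] [NormedSpace ℂ U]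
    (cU : U →SL[starRingEnd ℂ] U) (B : U →L[ℂ] (U →L[ℂ] ℂ)) : Prop :=
  ∀ v w, B (cU v) w = star (B v (cU w))

/-- `B` is *symmetric*: `⟨B v, w⟩ = ⟨B w, v⟩` (bilinear duality pairing). -/
def IsSymForm {U : Type*} [NormedAddCommGroup U] [NormedSpace ℂ U]
    (B : U →L[ℂ] (U →L[ℂ] ℂ)) : Prop :=
  ∀ v w, B v w = B w v

/-- `B` is *non-negative*: `⟨B v, v̄⟩ ≥ 0` (in particular real). -/
def IsNonnegForm {U : Type*} [NormedAddCommGroup U] [NormedSpace ℂ U]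
    (cU : U →SL[starRingEnd ℂ] U) (B : U →L[ℂ] (U →L[ℂ] ℂ)) : Prop :=
  ∀ v, (B v (cU v)).im = 0 ∧ 0 ≤ (B v (cU v)).re

/-- real-valued, symmetric and non-negative operator. -/
def IsRealSymNonneg {U : Type*} [NormedAddCommGroup U] [NormedSpace ℂ U]
    (cU : U →SL[starRingEnd ℂ] U) (B : U →L[ℂ] (U →L[ℂ] ℂ)) : Prop :=
  IsRealForm cU B ∧ IsSymForm B ∧ IsNonnegForm cU B

/-- **Assumption A7**: either the coercive case (`α = 1`, `A` real, symmetric, non-negative)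
or the wave propagation case (`α = i`, `A = A₀ + i A₁ − A₂` with real, symmetric,
non-negative parts). -/
def AssumptionA7 {U : Type*} [NormedAddCommGroup U] [NormedSpace ℂ U]
    (α : ℂ) (cU : U →SL[starRingEnd ℂ] U) (A : U →L[ℂ] (U →L[ℂ] ℂ)) : Prop :=
  (α = 1 ∧ IsRealSymNonneg cU A) ∨
  (α = Complex.I ∧ ∃ A0 A1 A2 : U →L[ℂ] (U →L[ℂ] ℂ),
    A = A0 + Complex.I • A1 - A2 ∧
    IsRealSymNonneg cU A0 ∧ IsRealSymNonneg cU A1 ∧ IsRealSymNonneg cU A2)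

/-- The squared `M`-norm `‖l‖²_M = ⟨M l, l̄⟩` on `Λ`. -/
noncomputable def sqM {Lam : Type*} [NormedAddCommGroup Lam] [NormedSpace ℂ Lam]
    (cL : Lam →SL[starRingEnd ℂ] Lam) (M : Lam →L[ℂ] (Lam →L[ℂ] ℂ)) (l : Lam) : ℝ :=
  (M l (cL l)).re

/-- The squared `M⁻¹`-norm `‖μ‖²_{M⁻¹} = ⟨M⁻¹ μ, μ̄⟩` on `Λ*` (here `Minv = M⁻¹`). -/
noncomputable def sqMinv {Lam : Type*} [NormedAddCommGroup Lam] [NormedSpace ℂ Lam]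
    (cL : Lam →SL[starRingEnd ℂ] Lam) (Minv : (Lam →L[ℂ] ℂ) →L[ℂ] Lam)
    (μ : Lam →L[ℂ] ℂ) : ℝ :=
  (μ (cL (Minv μ))).re

/-- The scattering operator in its simplified form (valid under A4),
`S = −I + 2α M T Ã⁻¹ T^⊤`, with `Atinv = Ã⁻¹ = (A + α T^⊤ M T)⁻¹`. -/
noncomputable def scatOp {U Lam : Type*}
    [NormedAddCommGroup U] [NormedSpace ℂ U] [NormedAddCommGroup Lam] [NormedSpace ℂ Lam]
    (T : U →L[ℂ] Lam) (M : Lam →L[ℂ] (Lam →L[ℂ] ℂ))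
    (Atinv : (U →L[ℂ] ℂ) →L[ℂ] U) (α : ℂ) :
    (Lam →L[ℂ] ℂ) →L[ℂ] (Lam →L[ℂ] ℂ) :=
  -(ContinuousLinearMap.id ℂ (Lam →L[ℂ] ℂ)) +
    (2 * α) • ((M.comp T).comp (Atinv.comp (trOp T)))


lemma key_calc (α a b m c : ℂ) (hαα : α * star α = 1)
    (hE : a + α * m = star b) :
    (c - (2*star α) * star b - (2*α)*b + (2*α)*(2*star α)*m).re + (4*(α*star a)).re = c.re := by
  have hE' : star a + star α * star m = b := by
    have h := congrArg star hE
    simp only [star_add, star_mul', star_star] at h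
    linear_combination h
  have hcomp : (c - (2*star α) * star b - (2*α)*b + (2*α)*(2*star α)*m) + 4*(α*star a)
      = c + (2*(α*star a) - 2*(star (α*star a))) + (2*m - 2*star m) := by
    have hs : star (α * star a) = star α * a := by
      simp [star_mul', star_star, mul_comm]
    rw [hs]
    linear_combination (2*star α)*hE + (2*α)*hE' + (2*m - 2*star m)*hαα
  rw [← Complex.add_re, hcomp]
  simp [Complex.add_re, Complex.sub_re, Complex.star_def, Complex.conj_re]

lemma core_id {U Lam : Type*}
    [NormedAddCommGroup U] [NormedSpace ℂ U] [NormedAddCommGroup Lam] [NormedSpace ℂ Lam]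
    (cU : U →SL[starRingEnd ℂ] U) (cL : Lam →SL[starRingEnd ℂ] Lam)
    (T : U →L[ℂ] Lam)
    (hTreal : ∀ v, T (cU v) = cL (T v))
    (A : U →L[ℂ] (U →L[ℂ] ℂ)) (α : ℂ)
    (M : Lam →L[ℂ] (Lam →L[ℂ] ℂ))
    (hMreal : IsRealForm cL M) (hMsym : IsSymForm M)
    (Minv : (Lam →L[ℂ] ℂ) →L[ℂ] Lam)
    (hMinv_l : ∀ l : Lam, Minv (M l) = l) (hMinv_r : ∀ μ : Lam →L[ℂ] ℂ, M (Minv μ) = μ)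
    (Atinv : (U →L[ℂ] ℂ) →L[ℂ] U)
    (hAt_r : ∀ g : U →L[ℂ] ℂ, (A + α • ((trOp T).comp (M.comp T))) (Atinv g) = g)
    (hαα : α * star α = 1) (lam : Lam →L[ℂ] ℂ) :
    sqMinv cL Minv (scatOp T M Atinv α lam)
        + (4*(α * star (A (Atinv (trOp T lam)) (cU (Atinv (trOp T lam)))))).re
      = sqMinv cL Minv lam := by
  set v := Atinv (trOp T lam) with hv
  set w := Minv lam with hw
  have hMw : M w = lam := hMinv_r lam
  set a := A v (cU v) with ha
  set b := M (T v) (cL w) with hb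
  set m := M (T v) (cL (T v)) with hm
  set c := M w (cL w) with hc
  have hMwTv : M w (cL (T v)) = star b := (hMsym _ _).trans (hMreal _ _)
  have hl1 : lam (cL w) = c := by rw [← hMw]
  have hl2 : lam (cL (T v)) = star b := by rw [← hMw]; exact hMwTv
  have hS : scatOp T M Atinv α lam = -lam + (2*α) • M (T v) := by
    ext x
    simp only [scatOp, ContinuousLinearMap.add_apply, ContinuousLinearMap.neg_apply,
      ContinuousLinearMap.id_apply, ContinuousLinearMap.smul_apply,
      ContinuousLinearMap.comp_apply, ← hv]
  have hMinvS : Minv (-lam + (2*α) • M (T v)) = -w + (2*α) • T v := by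
    rw [map_add, map_neg, map_smul, hMinv_l, ← hw]
  have hcLx : cL (-w + (2*α) • T v) = -(cL w) + star (2*α) • cL (T v) := by
    rw [map_add, map_neg, ContinuousLinearMap.map_smulₛₗ, starRingEnd_apply]
  have hstar2 : star (2*α) = 2 * star α := by
    simp [star_mul', mul_comm]
  have hval : scatOp T M Atinv α lam (cL (Minv (scatOp T M Atinv α lam)))
      = c - (2*star α) * star b - (2*α)*b + (2*α)*(2*star α)*m := by
    rw [hS, hMinvS, hcLx]
    simp only [ContinuousLinearMap.add_apply, ContinuousLinearMap.neg_apply,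
      ContinuousLinearMap.smul_apply, map_add, map_neg, map_smul, smul_eq_mul,
      hl1, hl2, hstar2]
    rw [← hb, ← hm]
    ring
  have hE : a + α * m = star b := by
    have h := congrArg (fun f : U →L[ℂ] ℂ => f (cU v)) (hAt_r (trOp T lam))
    simp only [ContinuousLinearMap.add_apply, ContinuousLinearMap.smul_apply,
      ContinuousLinearMap.comp_apply, smul_eq_mul] at h
    have htr : trOp T lam (cU v) = lam (T (cU v)) := rfl
    have htr2 : trOp T (M (T (Atinv (trOp T lam)))) (cU v)
        = M (T v) (T (cU v)) := rfl
    rw [← hv] at h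
    rw [htr, htr2, hTreal, hl2, ← hm] at h
    exact h
  have hsqS : sqMinv cL Minv (scatOp T M Atinv α lam)
      = (c - (2*star α) * star b - (2*α)*b + (2*α)*(2*star α)*m).re := by
    simp only [sqMinv]; rw [hval]
  have hsqlam : sqMinv cL Minv lam = c.re := by
    simp only [sqMinv]; rw [← hw, hl1]
  rw [hsqS, hsqlam]
  exact key_calc α a b m c hαα hE

set_option synthInstance.maxHeartbeats 1000000 in
/-- pseudo-energy identity and non-expansiveness of the scattering
operator: under A1–A7 (with AXR), `‖Sλ‖²_{M⁻¹} + 4p = ‖λ‖²_{M⁻¹}` with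
`p = ⟨A v, v̄⟩` (coercive case) resp. `p = Im ⟨A v, v̄⟩` (wave case), `v = Ã⁻¹ T^⊤ λ`,
`p ≥ 0`, hence `‖Sλ‖_{M⁻¹} ≤ ‖λ‖_{M⁻¹}`. -/
theorem statement11
    {Uhat U Lam : Type*}
    [NormedAddCommGroup Uhat] [InnerProductSpace ℂ Uhat] [CompleteSpace Uhat]
    [NormedAddCommGroup U] [InnerProductSpace ℂ U] [CompleteSpace U]
    [NormedAddCommGroup Lam] [InnerProductSpace ℂ Lam] [CompleteSpace Lam]
    -- conjugations of the complexified spaces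
    (cUhat : Uhat →SL[starRingEnd ℂ] Uhat) (cU : U →SL[starRingEnd ℂ] U)
    (cL : Lam →SL[starRingEnd ℂ] Lam)
    (hcUhat : ∀ v, cUhat (cUhat v) = v) (hcU : ∀ v, cU (cU v) = v)
    (hcL : ∀ l, cL (cL l) = l)
    (hcUhat_iso : ∀ v, ‖cUhat v‖ = ‖v‖) (hcU_iso : ∀ v, ‖cU v‖ = ‖v‖)
    (hcL_iso : ∀ l, ‖cL l‖ = ‖l‖)
    (R : Uhat →L[ℂ] U) (T : U →L[ℂ] Lam) (X : Lam →L[ℂ] Lam)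
    -- `R`, `T` real-valued; AXR: `X` real-valued
    (hRreal : ∀ v, R (cUhat v) = cU (R v))
    (hTreal : ∀ v, T (cU v) = cL (T v))
    (hXreal : ∀ l, X (cL l) = cL (X l))
    -- Assumption A1
    (hRinj : LinearMap.ker (R : Uhat →ₗ[ℂ] U) = ⊥)
    (hRclosed : IsClosed (Set.range R))
    -- Assumption A2
    (hX2 : X.comp X = ContinuousLinearMap.id ℂ Lam)
    (hA2 : LinearMap.range (R : Uhat →ₗ[ℂ] U) = LinearMap.ker (((ContinuousLinearMap.id ℂ Lam - X).comp T : U →L[ℂ] Lam) : U →ₗ[ℂ] Lam))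
    (A : U →L[ℂ] (U →L[ℂ] ℂ))
    -- `Â = R^⊤ A R` bijective with bounded inverse
    (Ahatinv : (Uhat →L[ℂ] ℂ) →L[ℂ] Uhat)
    (hAhat_left : ∀ uhat : Uhat, Ahatinv (trOp R (A (R uhat))) = uhat)
    (hAhat_right : ∀ g : Uhat →L[ℂ] ℂ, trOp R (A (R (Ahatinv g))) = g)
    (α : ℂ) (hα : α ≠ 0)
    (M : Lam →L[ℂ] (Lam →L[ℂ] ℂ))
    -- Assumption A4
    (hA4 : (trOp X).comp (M.comp X) = M)
    -- Assumption A6 together with A3 (under A4): `M` real, symmetric, positively bounded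
    -- below, with bounded inverse `Minv`
    (hMreal : IsRealForm cL M) (hMsym : IsSymForm M)
    (cM : ℝ) (hcM : 0 < cM)
    (hMlow : ∀ l : Lam, (M l (cL l)).im = 0 ∧ cM * ‖l‖ ^ 2 ≤ (M l (cL l)).re)
    (Minv : (Lam →L[ℂ] ℂ) →L[ℂ] Lam)
    (hMinv_l : ∀ l : Lam, Minv (M l) = l) (hMinv_r : ∀ μ : Lam →L[ℂ] ℂ, M (Minv μ) = μ)
    -- Assumption A5: `Ã = A + α T^⊤ M T` has a bounded inverse
    (Atinv : (U →L[ℂ] ℂ) →L[ℂ] U)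
    (hAt_l : ∀ u : U, Atinv ((A + α • ((trOp T).comp (M.comp T))) u) = u)
    (hAt_r : ∀ g : U →L[ℂ] ℂ, (A + α • ((trOp T).comp (M.comp T))) (Atinv g) = g) :
    -- Assumption A7, case (i): coercive case
    ((α = 1 ∧ IsRealSymNonneg cU A) →
      ∀ lam : Lam →L[ℂ] ℂ,
        0 ≤ (A (Atinv (trOp T lam)) (cU (Atinv (trOp T lam)))).re ∧
        sqMinv cL Minv (scatOp T M Atinv α lam)
            + 4 * (A (Atinv (trOp T lam)) (cU (Atinv (trOp T lam)))).re
          = sqMinv cL Minv lam ∧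
        Real.sqrt (sqMinv cL Minv (scatOp T M Atinv α lam))
          ≤ Real.sqrt (sqMinv cL Minv lam)) ∧
    -- Assumption A7, case (ii): wave propagation case
    ((α = Complex.I ∧ ∃ A0 A1 A2 : U →L[ℂ] (U →L[ℂ] ℂ),
        A = A0 + Complex.I • A1 - A2 ∧
        IsRealSymNonneg cU A0 ∧ IsRealSymNonneg cU A1 ∧ IsRealSymNonneg cU A2) →
      ∀ lam : Lam →L[ℂ] ℂ,
        0 ≤ (A (Atinv (trOp T lam)) (cU (Atinv (trOp T lam)))).im ∧
        sqMinv cL Minv (scatOp T M Atinv α lam)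
            + 4 * (A (Atinv (trOp T lam)) (cU (Atinv (trOp T lam)))).im
          = sqMinv cL Minv lam ∧
        Real.sqrt (sqMinv cL Minv (scatOp T M Atinv α lam))
          ≤ Real.sqrt (sqMinv cL Minv lam)) := by
  constructor
  · rintro ⟨hα1, hreal, hsym, hnn⟩ lam
    have hαα : α * star α = 1 := by rw [hα1]; norm_num
    have hid := core_id cU cL T hTreal A α M hMreal hMsym Minv hMinv_l hMinv_r Atinv hAt_r
      hαα lam
    set v := Atinv (trOp T lam) with hv
    have h4 : (4*(α * star (A v (cU v)))).re = 4 * (A v (cU v)).re := by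
      rw [hα1, one_mul]
      simp [Complex.star_def, Complex.mul_re]
    have hp0 : 0 ≤ (A v (cU v)).re := (hnn v).2
    refine ⟨hp0, ?_, ?_⟩
    · rw [← h4]; exact hid
    · apply Real.sqrt_le_sqrt
      linarith [hid, h4, hp0]
  · rintro ⟨hαI, A0, A1, A2, hdec, h0, h1, h2⟩ lam
    have hαα : α * star α = 1 := by
      rw [hαI]; simp [Complex.star_def, Complex.conj_I]
    have hid := core_id cU cL T hTreal A α M hMreal hMsym Minv hMinv_l hMinv_r Atinv hAt_r
      hαα lam
    set v := Atinv (trOp T lam) with hv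
    have h4 : (4*(α * star (A v (cU v)))).re = 4 * (A v (cU v)).im := by
      rw [hαI]
      simp [Complex.star_def, Complex.mul_re, Complex.conj_re, Complex.conj_im,
        Complex.I_re, Complex.I_im]
    have hav : A v (cU v) = A0 v (cU v) + Complex.I * (A1 v (cU v)) - A2 v (cU v) := by
      rw [hdec]
      simp [ContinuousLinearMap.add_apply, ContinuousLinearMap.sub_apply,
        ContinuousLinearMap.smul_apply, smul_eq_mul]
    have hp0 : 0 ≤ (A v (cU v)).im := by
      rw [hav]
      simp [Complex.add_im, Complex.sub_im, Complex.mul_im, Complex.I_re, Complex.I_im,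
        (h0.2.2 v).1, (h2.2.2 v).1]
      exact (h1.2.2 v).2
    refine ⟨hp0, ?_, ?_⟩
    · rw [← h4]; exact hid
    · apply Real.sqrt_le_sqrt
      linarith [hid, h4, hp0]
end

section
/- Under Assumptions A1–A3, A5, A6 and range(T) = Λ, there exists a constant γ > 0 such that ‖(I − X^⊤ S) λ‖_{M^{-1}} ≥ γ ‖λ‖_{M^{-1}} for all λ ∈ Λ*. If additionally Assumptions A4, AXR and A7 hold, then with the same constant γ the coercivity estimate Re ⟨M^{-1} (I − X^⊤ S) λ, λ̄⟩ ≥ (γ²/2) ‖λ‖²_{M^{-1}} holds for all λ ∈ Λ*. -/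
/-- The scattering operator in its full form `S = −I + α (M + X^⊤ M X) T Ã⁻¹ T^⊤`. -/
noncomputable def scatOpFull {U Lam : Type*}
    [NormedAddCommGroup U] [NormedSpace ℂ U] [NormedAddCommGroup Lam] [NormedSpace ℂ Lam]
    (T : U →L[ℂ] Lam) (X : Lam →L[ℂ] Lam) (M : Lam →L[ℂ] (Lam →L[ℂ] ℂ))
    (Atinv : (U →L[ℂ] ℂ) →L[ℂ] U) (α : ℂ) :
    (Lam →L[ℂ] ℂ) →L[ℂ] (Lam →L[ℂ] ℂ) :=
  -(ContinuousLinearMap.id ℂ (Lam →L[ℂ] ℂ)) +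
    α • (((M + (trOp X).comp (M.comp X)).comp T).comp (Atinv.comp (trOp T)))


@[simp] lemma trOp_apply {X Y : Type*} [NormedAddCommGroup X] [NormedSpace ℂ X]
    [NormedAddCommGroup Y] [NormedSpace ℂ Y] (B : X →L[ℂ] Y) (μ : Y →L[ℂ] ℂ) (x : X) :
    trOp B μ x = μ (B x) := rfl

lemma exists_right_inv {U Lam : Type*} [NormedAddCommGroup U] [InnerProductSpace ℂ U]
    [CompleteSpace U] [NormedAddCommGroup Lam] [InnerProductSpace ℂ Lam] [CompleteSpace Lam]
    (T : U →L[ℂ] Lam) (hTsurj : LinearMap.range (T : U →ₗ[ℂ] Lam) = ⊤) :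
    ∃ Td : Lam →L[ℂ] U, ∀ l, T (Td l) = l := by
  set K := LinearMap.ker (T : U →ₗ[ℂ] Lam) with hK
  haveI : CompleteSpace Kᗮ := (Submodule.isClosed_orthogonal K).completeSpace_coe
  set E : Kᗮ →L[ℂ] Lam := T.comp (Submodule.subtypeL Kᗮ) with hE
  have hinj : LinearMap.ker (E : Kᗮ →ₗ[ℂ] Lam) = ⊥ := by
    rw [LinearMap.ker_eq_bot']
    intro x hx
    have hxK : (x : U) ∈ K := by
      exact hx
    have : (x : U) = 0 := by
      have h := x.2
      rw [Submodule.mem_orthogonal] at h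
      have := h _ hxK
      simpa [inner_self_eq_zero] using this
    exact Subtype.ext this
  have hsurj : LinearMap.range (E : Kᗮ →ₗ[ℂ] Lam) = ⊤ := by
    rw [LinearMap.range_eq_top]
    intro l
    obtain ⟨u, hu⟩ : ∃ u, T u = l := (LinearMap.range_eq_top.mp hTsurj) l
    obtain ⟨y, hy, z, hz, rfl⟩ := K.exists_add_mem_mem_orthogonal u
    refine ⟨⟨z, hz⟩, ?_⟩
    have hy0 : T y = 0 := by simpa [hK, LinearMap.mem_ker] using hy
    simp only [hE, ContinuousLinearMap.coe_coe, ContinuousLinearMap.comp_apply, Submodule.subtypeL_apply]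
    rw [← hu, map_add, hy0, zero_add]
  let e := ContinuousLinearEquiv.ofBijective E hinj hsurj
  refine ⟨(Submodule.subtypeL Kᗮ).comp e.symm.toContinuousLinearMap, fun l => ?_⟩
  exact e.apply_symm_apply l

set_option synthInstance.maxHeartbeats 400000
set_option maxHeartbeats 1000000

/-- under A1–A3, A5, A6 and `range(T) = Λ` there is `γ > 0` with
`‖(I − X^⊤S)λ‖_{M⁻¹} ≥ γ ‖λ‖_{M⁻¹}`; under A4, AXR and A7 additionally
`Re ⟨M⁻¹(I − X^⊤S)λ, λ̄⟩ ≥ (γ²/2)‖λ‖²_{M⁻¹}` with the same `γ`. -/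
theorem statement16
    {Uhat U Lam : Type*}
    [NormedAddCommGroup Uhat] [InnerProductSpace ℂ Uhat] [CompleteSpace Uhat]
    [NormedAddCommGroup U] [InnerProductSpace ℂ U] [CompleteSpace U]
    [NormedAddCommGroup Lam] [InnerProductSpace ℂ Lam] [CompleteSpace Lam]
    (cUhat : Uhat →SL[starRingEnd ℂ] Uhat) (cU : U →SL[starRingEnd ℂ] U)
    (cL : Lam →SL[starRingEnd ℂ] Lam)
    (hcUhat : ∀ v, cUhat (cUhat v) = v) (hcU : ∀ v, cU (cU v) = v)
    (hcL : ∀ l, cL (cL l) = l)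
    (hcUhat_iso : ∀ v, ‖cUhat v‖ = ‖v‖) (hcU_iso : ∀ v, ‖cU v‖ = ‖v‖)
    (hcL_iso : ∀ l, ‖cL l‖ = ‖l‖)
    (R : Uhat →L[ℂ] U) (T : U →L[ℂ] Lam) (X : Lam →L[ℂ] Lam)
    (hRreal : ∀ v, R (cUhat v) = cU (R v))
    (hTreal : ∀ v, T (cU v) = cL (T v))
    -- Assumption A1
    (hRinj : LinearMap.ker (R : Uhat →ₗ[ℂ] U) = ⊥)
    (hRclosed : IsClosed (Set.range R))
    -- Assumption A2
    (hX2 : X.comp X = ContinuousLinearMap.id ℂ Lam)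
    (hA2 : LinearMap.range (R : Uhat →ₗ[ℂ] U) = LinearMap.ker ((ContinuousLinearMap.id ℂ Lam - X).comp T : U →ₗ[ℂ] Lam))
    (A : U →L[ℂ] (U →L[ℂ] ℂ))
    -- `Â = R^⊤ A R` bijective with bounded inverse
    (Ahatinv : (Uhat →L[ℂ] ℂ) →L[ℂ] Uhat)
    (hAhat_left : ∀ uhat : Uhat, Ahatinv (trOp R (A (R uhat))) = uhat)
    (hAhat_right : ∀ g : Uhat →L[ℂ] ℂ, trOp R (A (R (Ahatinv g))) = g)
    (α : ℂ) (hα : α ≠ 0)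
    (M : Lam →L[ℂ] (Lam →L[ℂ] ℂ))
    -- Assumption A3: `M + X^⊤ M X` has a bounded inverse
    (Ninv : (Lam →L[ℂ] ℂ) →L[ℂ] Lam)
    (hNl : ∀ l : Lam, Ninv ((M + (trOp X).comp (M.comp X)) l) = l)
    (hNr : ∀ μ : Lam →L[ℂ] ℂ, (M + (trOp X).comp (M.comp X)) (Ninv μ) = μ)
    -- Assumption A5: `Ã = A + α T^⊤ M T` has a bounded inverse
    (Atinv : (U →L[ℂ] ℂ) →L[ℂ] U)
    (hAt_l : ∀ u : U, Atinv ((A + α • ((trOp T).comp (M.comp T))) u) = u)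
    (hAt_r : ∀ g : U →L[ℂ] ℂ, (A + α • ((trOp T).comp (M.comp T))) (Atinv g) = g)
    -- Assumption A6: `M` real, symmetric, positively bounded below, with inverse `Minv`
    (hMreal : IsRealForm cL M) (hMsym : IsSymForm M)
    (cM : ℝ) (hcM : 0 < cM)
    (hMlow : ∀ l : Lam, (M l (cL l)).im = 0 ∧ cM * ‖l‖ ^ 2 ≤ (M l (cL l)).re)
    (Minv : (Lam →L[ℂ] ℂ) →L[ℂ] Lam)
    (hMinv_l : ∀ l : Lam, Minv (M l) = l) (hMinv_r : ∀ μ : Lam →L[ℂ] ℂ, M (Minv μ) = μ)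
    -- surjectivity of the trace operator
    (hTsurj : LinearMap.range (T : U →ₗ[ℂ] Lam) = ⊤) :
    ∃ γ : ℝ, 0 < γ ∧
      (∀ lam : Lam →L[ℂ] ℂ,
        γ * Real.sqrt (sqMinv cL Minv lam) ≤
          Real.sqrt (sqMinv cL Minv (lam - trOp X (scatOpFull T X M Atinv α lam)))) ∧
      -- under A4, AXR and A7 the coercivity estimate holds with the same `γ`
      (((trOp X).comp (M.comp X) = M ∧ (∀ l, X (cL l) = cL (X l)) ∧ AssumptionA7 α cU A) →
        ∀ lam : Lam →L[ℂ] ℂ,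
          γ ^ 2 / 2 * sqMinv cL Minv lam ≤
            (lam (cL (Minv (lam - trOp X (scatOpFull T X M Atinv α lam))))).re) := by
  classical
  obtain ⟨Td, hTd⟩ := exists_right_inv T hTsurj
  set At : U →L[ℂ] (U →L[ℂ] ℂ) := A + α • ((trOp T).comp (M.comp T)) with hAtdef
  set N : Lam →L[ℂ] (Lam →L[ℂ] ℂ) := M + (trOp X).comp (M.comp X) with hNdef
  -- the map λ ↦ (I - X^⊤ S) λ
  set F : (Lam →L[ℂ] ℂ) → (Lam →L[ℂ] ℂ) :=
    fun lam => lam - trOp X (scatOpFull T X M Atinv α lam) with hFdef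
  -- pointwise basics
  have hXX : ∀ l, X (X l) = l := by
    intro l
    have := ContinuousLinearMap.ext_iff.mp hX2 l
    simpa using this
  have hmemR : ∀ u : U, X (T u) = T u ↔ u ∈ LinearMap.range (R : Uhat →ₗ[ℂ] U) := by
    intro u
    rw [hA2, LinearMap.mem_ker]
    constructor
    · intro h; simp [h]
    · intro h
      have : T u - X (T u) = 0 := by simpa using h
      have := sub_eq_zero.mp this
      exact this.symm
  have hTR : ∀ v : Uhat, X (T (R v)) = T (R v) := fun v => (hmemR _).mpr ⟨v, rfl⟩
  have hTinj' : ∀ μ : Lam →L[ℂ] ℂ, (∀ v, μ (T v) = 0) → μ = 0 := by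
    intro μ h
    ext l
    have := h (Td l)
    rw [hTd l] at this
    simpa using this
  have hAtapp : ∀ u v, At u v = A u v + α * M (T u) (T v) := by
    intro u v; simp [hAtdef]
  have hNapp : ∀ m l, N m l = M m l + M (X m) (X l) := by
    intro m l; simp [hNdef]
  have hFapp : ∀ lam l, F lam l =
      lam l + lam (X l) - α * N (T (Atinv (trOp T lam))) (X l) := by
    intro lam l
    simp [hFdef, scatOpFull, hNdef]
    ring
  -- the inverse operator Q
  set u1 : (Lam →L[ℂ] ℂ) →L[ℂ] U :=
    (Td.comp Ninv).comp (α⁻¹ • ContinuousLinearMap.id ℂ (Lam →L[ℂ] ℂ)) with hu1def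
  set w1 : (Lam →L[ℂ] ℂ) →L[ℂ] (U →L[ℂ] ℂ) := trOp T - At.comp u1 with hw1def
  set umap : (Lam →L[ℂ] ℂ) →L[ℂ] U := R.comp (Ahatinv.comp ((trOp R).comp w1)) + u1
    with humdef
  set Q : (Lam →L[ℂ] ℂ) →L[ℂ] (Lam →L[ℂ] ℂ) := (trOp Td).comp (At.comp umap) with hQdef
  -- Q is a right inverse of F
  have hFQ : ∀ g, F (Q g) = g := by
    intro g
    set uh : Uhat := Ahatinv ((trOp R) (w1 g)) with huhdef
    have humg : umap g = R uh + u1 g := by simp [humdef, huhdef]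
    have hTu1 : T (u1 g) = Ninv (α⁻¹ • g) := by simp [hu1def, hTd]
    have hNTu1 : ∀ l, α * N (T (u1 g)) l = g l := by
      intro l
      rw [hTu1, hNr]
      simp only [ContinuousLinearMap.smul_apply, smul_eq_mul]
      rw [← mul_assoc, mul_inv_cancel₀ hα, one_mul]
    have hAhr := hAhat_right ((trOp R) (w1 g))
    have hARu : ∀ w, A (R uh) (R w) = g (T (R w)) - At (u1 g) (R w) := by
      intro w
      have h := congrArg (fun f => f w) hAhr
      simpa [hw1def, huhdef] using h
    set θ : U →L[ℂ] ℂ := A (R uh) + At (u1 g) - trOp T g with hθdef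
    have hθR : ∀ w, θ (R w) = 0 := by
      intro w
      have e : θ (R w) = A (R uh) (R w) + At (u1 g) (R w) - g (T (R w)) := by
        simp [hθdef]
      rw [e, hARu w]; ring
    have hθker : ∀ v, T v = 0 → θ v = 0 := by
      intro v hv
      have hXv : X (T v) = T v := by rw [hv]; simp
      obtain ⟨w, rfl⟩ := (hmemR v).mp hXv
      exact hθR w
    set μ' : Lam →L[ℂ] ℂ := trOp Td θ with hμdef
    have hTμ : ∀ v, μ' (T v) = θ v := by
      intro v
      have h0 : θ (Td (T v) - v) = 0 := hθker _ (by rw [map_sub, hTd, sub_self])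
      rw [map_sub] at h0
      have := sub_eq_zero.mp h0
      simpa [hμdef] using this
    have hμsum : ∀ v : U, μ' (X (T v)) + μ' (T v) = 0 := by
      intro v
      set z := X (T v) + T v with hz
      have hXz : X (T (Td z)) = T (Td z) := by
        rw [hTd, hz, map_add, hXX, add_comm]
      obtain ⟨w, hw⟩ := (hmemR _).mp hXz
      have h0 : θ (Td z) = 0 := by rw [← hw]; exact hθR w
      have h1 : μ' z = 0 := by simpa [hμdef] using h0
      rw [hz, map_add] at h1
      exact h1
    set ν : Lam →L[ℂ] ℂ := (2⁻¹ : ℂ) • (μ' - trOp X μ') with hνdef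
    have hνT : ∀ v, ν (T v) = θ v := by
      intro v
      have h1 : μ' (X (T v)) = - θ v := by
        have h := hμsum v
        rw [hTμ v] at h
        linear_combination h
      calc ν (T v) = 2⁻¹ * (μ' (T v) - μ' (X (T v))) := by simp [hνdef]
        _ = θ v := by rw [hTμ v, h1]; ring
    have hνX : ∀ l, ν (X l) = - ν l := by
      intro l
      have e1 : ν (X l) = 2⁻¹ * (μ' (X l) - μ' (X (X l))) := by simp [hνdef]
      have e2 : ν l = 2⁻¹ * (μ' l - μ' (X l)) := by simp [hνdef]
      rw [e1, e2, hXX]; ring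
    set ρ : Lam →L[ℂ] ℂ := ν + g + α • M (T (R uh)) with hρdef
    have hAtρ : ∀ v, At (umap g) v = ρ (T v) := by
      intro v
      have hsplit : At (umap g) = At (R uh) + At (u1 g) := by rw [humg, map_add]
      have hθv : θ v = A (R uh) v + At (u1 g) v - g (T v) := by simp [hθdef]
      have hρv : ρ (T v) = ν (T v) + g (T v) + α * M (T (R uh)) (T v) := by simp [hρdef]
      rw [hρv, hνT v, hθv, hsplit]
      simp only [ContinuousLinearMap.add_apply]
      rw [hAtapp]
      ring
    have hQgρ : Q g = ρ := by
      ext l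
      have e : Q g l = At (umap g) (Td l) := rfl
      rw [e, hAtρ, hTd]
    have hTQ : trOp T (Q g) = At (umap g) := by
      ext v
      have e : trOp T (Q g) v = Q g (T v) := rfl
      rw [e, hQgρ]
      exact (hAtρ v).symm
    have hAtinvQ : Atinv (trOp T (Q g)) = umap g := by
      rw [hTQ]; exact hAt_l (umap g)
    ext l
    rw [hFapp, hAtinvQ]
    have hTum : T (umap g) = T (R uh) + T (u1 g) := by rw [humg, map_add]
    have hNsum : N (T (umap g)) (X l) = N (T (R uh)) (X l) + N (T (u1 g)) (X l) := by
      rw [hTum, map_add]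
      simp
    have hN1 : N (T (R uh)) (X l) = M (T (R uh)) (X l) + M (T (R uh)) l := by
      rw [hNapp, hTR uh, hXX]
    have h2 := hNTu1 (X l)
    have hρl : ρ l = ν l + g l + α * M (T (R uh)) l := by simp [hρdef]
    have hρXl : ρ (X l) = ν (X l) + g (X l) + α * M (T (R uh)) (X l) := by simp [hρdef]
    rw [hQgρ, hNsum, hρl, hρXl, hνX l, hN1]
    linear_combination - h2
  -- F is injective
  have hFinj : ∀ lam, F lam = 0 → lam = 0 := by
    intro lam hl
    set u : U := Atinv (trOp T lam) with hudef
    have hstar : ∀ l, lam l + lam (X l) = α * N (T u) (X l) := by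
      intro l
      have h0 : F lam l = 0 := by rw [hl]; rfl
      rw [hFapp] at h0
      rw [← hudef] at h0
      linear_combination h0
    have hXTu : X (T u) = T u := by
      have hNN : N (X (T u)) = N (T u) := by
        ext l
        have hNXm : N (X (T u)) l = N (T u) (X l) := by
          rw [hNapp, hNapp, hXX, hXX]; ring
        rw [hNXm]
        have h1 := hstar l
        have h2 := hstar (X l)
        rw [hXX] at h2
        have h3 : α * N (T u) (X l) = α * N (T u) l := by linear_combination h2 - h1
        exact mul_left_cancel₀ hα h3
      have h := congrArg Ninv hNN
      rw [hNl, hNl] at h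
      exact h
    obtain ⟨uh, huh⟩ := (hmemR u).mp hXTu
    set ν : Lam →L[ℂ] ℂ := lam - α • M (T u) with hνdef
    have hTlam : ∀ v, lam (T v) = At u v := by
      intro v
      have h := hAt_r (trOp T lam)
      rw [← hudef] at h
      have h2 := congrArg (fun f => f v) h
      simpa using h2.symm
    have hν1 : ∀ v, ν (T v) = A u v := by
      intro v
      have e : ν (T v) = lam (T v) - α * M (T u) (T v) := by simp [hνdef]
      rw [e, hTlam v, hAtapp]
      ring
    have hν2 : ∀ l, ν (X l) = - ν l := by
      intro l
      have h1 := hstar l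
      rw [hNapp, hXTu, hXX] at h1
      have e1 : ν (X l) = lam (X l) - α * M (T u) (X l) := by simp [hνdef]
      have e2 : ν l = lam l - α * M (T u) l := by simp [hνdef]
      rw [e1, e2]
      linear_combination h1
    have hAhat0 : trOp R (A (R uh)) = 0 := by
      ext w
      have hXl : X (T (R w)) = T (R w) := hTR w
      have hv := hν2 (T (R w))
      rw [hXl] at hv
      have h0 : ν (T (R w)) = 0 := by
        have h2 : ν (T (R w)) + ν (T (R w)) = 0 := by linear_combination hv
        exact add_self_eq_zero.mp h2
      have e : trOp R (A (R uh)) w = A (R uh) (R w) := rfl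
      rw [e, show R uh = u from huh, ← hν1 (R w), h0]
      simp
    have huh0 : uh = 0 := by
      have h := hAhat_left uh
      rw [hAhat0] at h
      simpa using h.symm
    have hu0 : u = 0 := by rw [← huh, huh0, map_zero]
    have hTl0 : trOp T lam = 0 := by
      have h := hAt_r (trOp T lam)
      rw [← hudef, hu0] at h
      simpa using h.symm
    apply hTinj'
    intro v
    have h := congrArg (fun f => f v) hTl0
    simpa using h
  -- hence Q is a left inverse of F
  have hQF : ∀ lam, Q (F lam) = lam := by
    intro lam
    have hlin : F (Q (F lam) - lam) = F (Q (F lam)) - F lam := by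
      simp only [hFdef, map_sub]
      abel
    rw [hFQ (F lam), sub_self] at hlin
    have := hFinj _ hlin
    exact sub_eq_zero.mp this
  -- norm bound
  have hQbound : ∀ lam, ‖lam‖ ≤ (‖Q‖ + 1) * ‖F lam‖ := by
    intro lam
    calc ‖lam‖ = ‖Q (F lam)‖ := by rw [hQF]
      _ ≤ ‖Q‖ * ‖F lam‖ := Q.le_opNorm (F lam)
      _ ≤ (‖Q‖ + 1) * ‖F lam‖ :=
          mul_le_mul_of_nonneg_right (le_add_of_nonneg_right zero_le_one) (norm_nonneg _)
  -- sqMinv basics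
  have hsq_eq : ∀ μ : Lam →L[ℂ] ℂ, μ (cL (Minv μ)) = M (Minv μ) (cL (Minv μ)) := by
    intro μ
    have h : μ = M (Minv μ) := (hMinv_r μ).symm
    conv_lhs => rw [h]
    rw [hMinv_l]
  have hsq_low : ∀ μ, cM * ‖Minv μ‖ ^ 2 ≤ sqMinv cL Minv μ := by
    intro μ
    have h := (hMlow (Minv μ)).2
    unfold sqMinv
    rw [hsq_eq]
    exact h
  have hsq_nonneg : ∀ μ, 0 ≤ sqMinv cL Minv μ := by
    intro μ
    refine le_trans ?_ (hsq_low μ)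
    positivity
  have hnorm_le : ∀ μ : Lam →L[ℂ] ℂ, ‖μ‖ ≤ (‖M‖ + 1) * ‖Minv μ‖ := by
    intro μ
    calc ‖μ‖ = ‖M (Minv μ)‖ := by rw [hMinv_r]
      _ ≤ ‖M‖ * ‖Minv μ‖ := M.le_opNorm _
      _ ≤ (‖M‖ + 1) * ‖Minv μ‖ :=
          mul_le_mul_of_nonneg_right (le_add_of_nonneg_right zero_le_one) (norm_nonneg _)
  set c1 : ℝ := cM / (‖M‖ + 1) ^ 2 with hc1def
  have hc1pos : 0 < c1 := by
    apply div_pos hcM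
    positivity
  have hsq_low' : ∀ μ, c1 * ‖μ‖ ^ 2 ≤ sqMinv cL Minv μ := by
    intro μ
    have h1 := hnorm_le μ
    have h2 := hsq_low μ
    rw [hc1def, div_mul_eq_mul_div, div_le_iff₀ (by positivity)]
    have h3 : ‖μ‖ ^ 2 ≤ (‖M‖ + 1) ^ 2 * ‖Minv μ‖ ^ 2 := by
      nlinarith only [h1, norm_nonneg μ, norm_nonneg (Minv μ), norm_nonneg M]
    nlinarith only [h2, h3, hcM.le, sq_nonneg (‖M‖ + 1)]
  set c2 : ℝ := ‖Minv‖ + 1 with hc2def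
  have hc2pos : (0:ℝ) < c2 := by rw [hc2def]; positivity
  have hsq_up : ∀ μ, sqMinv cL Minv μ ≤ c2 * ‖μ‖ ^ 2 := by
    intro μ
    have h1 : sqMinv cL Minv μ ≤ ‖μ (cL (Minv μ))‖ := by
      unfold sqMinv
      exact Complex.re_le_norm _
    have h2 : ‖μ (cL (Minv μ))‖ ≤ ‖μ‖ * ‖cL (Minv μ)‖ := μ.le_opNorm _
    have h3 : ‖cL (Minv μ)‖ = ‖Minv μ‖ := hcL_iso _
    have h4 : ‖Minv μ‖ ≤ ‖Minv‖ * ‖μ‖ := Minv.le_opNorm μ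
    rw [h3] at h2
    rw [hc2def]
    nlinarith only [h1, h2, h4, norm_nonneg μ, sq_nonneg ‖μ‖, norm_nonneg (Minv μ)]
  have hQ1 : (0:ℝ) < ‖Q‖ + 1 := by positivity
  set γ : ℝ := Real.sqrt (c1 / (c2 * (‖Q‖ + 1) ^ 2)) with hγdef
  have hγsq : γ ^ 2 = c1 / (c2 * (‖Q‖ + 1) ^ 2) := by
    rw [hγdef]
    exact Real.sq_sqrt (by positivity)
  have hγpos : 0 < γ := by
    rw [hγdef]
    apply Real.sqrt_pos.mpr
    positivity
  have hmain : ∀ lam, γ ^ 2 * sqMinv cL Minv lam ≤ sqMinv cL Minv (F lam) := by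
    intro lam
    have h1 := hsq_low' (F lam)
    have h2 := hQbound lam
    have h3 := hsq_up lam
    rw [hγsq]
    have h4 : ‖lam‖ ^ 2 ≤ (‖Q‖ + 1) ^ 2 * ‖F lam‖ ^ 2 := by
      nlinarith only [h2, norm_nonneg lam, norm_nonneg (F lam), hQ1.le]
    rw [div_mul_eq_mul_div, div_le_iff₀ (by positivity)]
    calc c1 * sqMinv cL Minv lam ≤ c1 * (c2 * ‖lam‖ ^ 2) :=
          mul_le_mul_of_nonneg_left h3 hc1pos.le
      _ ≤ c1 * (c2 * ((‖Q‖ + 1) ^ 2 * ‖F lam‖ ^ 2)) :=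
          mul_le_mul_of_nonneg_left (mul_le_mul_of_nonneg_left h4 hc2pos.le) hc1pos.le
      _ = (c1 * ‖F lam‖ ^ 2) * (c2 * (‖Q‖ + 1) ^ 2) := by ring
      _ ≤ sqMinv cL Minv (F lam) * (c2 * (‖Q‖ + 1) ^ 2) :=
          mul_le_mul_of_nonneg_right h1 (by positivity)
  refine ⟨γ, hγpos, ?_, ?_⟩
  · intro lam
    have h := hmain lam
    have h2 : Real.sqrt (γ ^ 2 * sqMinv cL Minv lam) ≤ Real.sqrt (sqMinv cL Minv (F lam)) :=
      Real.sqrt_le_sqrt h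
    rw [Real.sqrt_mul (by positivity) _, Real.sqrt_sq hγpos.le] at h2
    have hFlam : F lam = lam - trOp X (scatOpFull T X M Atinv α lam) := by rw [hFdef]
    rw [hFlam] at h2
    exact h2
  · rintro ⟨hA4, hXR, hA7⟩ lam
    -- conjugation identity
    have hconj : ∀ μ ν' : Lam →L[ℂ] ℂ, ν' (cL (Minv μ)) = star (μ (cL (Minv ν'))) := by
      intro μ ν'
      have h1 : ν' (cL (Minv μ)) = M (Minv ν') (cL (Minv μ)) := by
        conv_lhs => rw [(hMinv_r ν').symm]
      have h2 : M (Minv ν') (cL (Minv μ)) = M (cL (Minv μ)) (Minv ν') := hMsym _ _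
      have h3 : M (cL (Minv μ)) (Minv ν') = star (M (Minv μ) (cL (Minv ν'))) :=
        hMreal (Minv μ) (Minv ν')
      have h4 : M (Minv μ) (cL (Minv ν')) = μ (cL (Minv ν')) := by
        conv_rhs => rw [(hMinv_r μ).symm]
      rw [h1, h2, h3, h4]
    have hA4' : ∀ m, trOp X (M (X m)) = M m := by
      intro m
      have h := congrArg (fun f => f m) hA4
      simpa using h
    have hMX : ∀ l, M (X l) = trOp X (M l) := by
      intro l
      have h := hA4' (X l)
      rw [hXX] at h
      exact h.symm
    have hMinvX : ∀ μ, Minv (trOp X μ) = X (Minv μ) := by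
      intro μ
      have h1 : trOp X μ = M (X (Minv μ)) := by
        conv_lhs => rw [(hMinv_r μ).symm]
        exact (hMX (Minv μ)).symm
      rw [h1, hMinv_l]
    have hsqX : ∀ μ, sqMinv cL Minv (trOp X μ) = sqMinv cL Minv μ := by
      intro μ
      unfold sqMinv
      rw [hMinvX]
      have e : trOp X μ (cL (X (Minv μ))) = μ (X (cL (X (Minv μ)))) := rfl
      rw [e, hXR, hXX]
    -- the scattering operator is a contraction in the M⁻¹ norm
    have hScontr : ∀ μ, sqMinv cL Minv (scatOpFull T X M Atinv α μ) ≤ sqMinv cL Minv μ := by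
      intro μ
      have hNm2 : ∀ (n : Lam) (l' : Lam), N n l' = M n l' + M n l' := by
        intro n l'
        rw [hNapp]
        have h := congrArg (fun f => f l') (hA4' n)
        simp only [trOp_apply] at h
        rw [h]
      set u : U := Atinv (trOp T μ) with hudef
      set m : Lam := T u with hmdef
      have hS : scatOpFull T X M Atinv α μ = -μ + (2 * α) • M m := by
        ext l'
        have e : scatOpFull T X M Atinv α μ l'
            = -(μ l') + α * N (T (Atinv (trOp T μ))) l' := by
          simp [scatOpFull, hNdef]
          ring
        rw [e, ← hudef, ← hmdef, hNm2]
        simp only [ContinuousLinearMap.add_apply, ContinuousLinearMap.neg_apply,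
          ContinuousLinearMap.smul_apply, smul_eq_mul]
        ring
      have hMinvS : Minv (scatOpFull T X M Atinv α μ) = -(Minv μ) + (2 * α) • m := by
        rw [hS, map_add, map_neg, map_smul, hMinv_l]
      set z : ℂ := μ (cL m) with hzdef
      set w : ℂ := M m (cL m) with hwdef
      have hMmcl : M m (cL (Minv μ)) = star z := by
        have h := hconj μ (M m)
        rw [hMinv_l] at h
        rw [← hzdef] at h
        exact h
      have hval : scatOpFull T X M Atinv α μ (cL (Minv (scatOpFull T X M Atinv α μ)))
          = μ (cL (Minv μ)) - (starRingEnd ℂ (2 * α)) * z - (2 * α) * star z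
            + ((2 * α) * starRingEnd ℂ (2 * α)) * w := by
        rw [hMinvS, hS]
        rw [map_add, map_neg, ContinuousLinearMap.map_smulₛₗ]
        simp only [ContinuousLinearMap.add_apply, ContinuousLinearMap.neg_apply,
          ContinuousLinearMap.smul_apply, map_add, map_neg, map_smul, smul_eq_mul]
        rw [hMmcl, ← hzdef, ← hwdef]
        ring
      have hz2 : z = A u (cU u) + α * w := by
        have h1 : cL m = T (cU u) := by rw [hmdef, ← hTreal]
        have h2 : μ (T (cU u)) = At u (cU u) := by
          have h := hAt_r (trOp T μ)
          rw [← hudef] at h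
          have h3 := congrArg (fun f => f (cU u)) h
          simpa using h3.symm
        rw [hzdef, h1, h2, hAtapp, ← h1, ← hmdef, ← hwdef]
      have hA7pos : 0 ≤ α.re * (A u (cU u)).re + α.im * (A u (cU u)).im := by
        rcases hA7 with ⟨hα1, hA⟩ | ⟨hαI, A0, A1, A2, hAeq, hA0, hA1, hA2⟩
        · rw [hα1]
          simpa using (hA.2.2 u).2
        · rw [hαI]
          simp only [Complex.I_re, Complex.I_im, zero_mul, one_mul, zero_add]
          have e : A u (cU u) = A0 u (cU u) + Complex.I * A1 u (cU u) - A2 u (cU u) := by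
            rw [hAeq]
            simp [ContinuousLinearMap.sub_apply, ContinuousLinearMap.add_apply,
              ContinuousLinearMap.smul_apply]
          rw [e]
          simp only [Complex.sub_im, Complex.add_im, Complex.mul_im, Complex.I_re, Complex.I_im,
            zero_mul, one_mul, zero_add]
          have h0 := hA0.2.2 u
          have h1 := hA1.2.2 u
          have h2 := hA2.2.2 u
          linarith only [h0.1.ge, h0.1.le, h1.2, h2.1.ge, h2.1.le]
      have hre : (scatOpFull T X M Atinv α μ (cL (Minv (scatOpFull T X M Atinv α μ)))).re
          = (μ (cL (Minv μ))).re - 2 * (2 * α.re * z.re + 2 * α.im * z.im)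
            + (4 * (α.re * α.re + α.im * α.im)) * w.re := by
        rw [hval]
        simp only [Complex.sub_re, Complex.add_re, Complex.mul_re, Complex.mul_im,
          Complex.conj_re, Complex.conj_im, Complex.star_def, map_mul, Complex.re_ofNat,
          Complex.im_ofNat]
        ring
      have hz2re := congrArg Complex.re hz2
      have hz2im := congrArg Complex.im hz2
      simp only [Complex.add_re, Complex.add_im, Complex.mul_re, Complex.mul_im] at hz2re hz2im
      have p1 := congrArg (fun t => α.re * t) hz2re
      have p2 := congrArg (fun t => α.im * t) hz2im
      unfold sqMinv
      rw [hre]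
      nlinarith only [p1, p2, hA7pos]
    set Gl : Lam →L[ℂ] ℂ := trOp X (scatOpFull T X M Atinv α lam) with hGdef
    have hGle : sqMinv cL Minv Gl ≤ sqMinv cL Minv lam := by
      rw [hGdef, hsqX]
      exact hScontr lam
    have hFlam : F lam = lam - Gl := by rw [hFdef, hGdef]
    have hid : 2 * (lam (cL (Minv (lam - Gl)))).re
        = sqMinv cL Minv lam - sqMinv cL Minv Gl + sqMinv cL Minv (lam - Gl) := by
      have hMinvF : Minv (lam - Gl) = Minv lam - Minv Gl := map_sub Minv lam Gl
      have hcLF : cL (Minv lam - Minv Gl) = cL (Minv lam) - cL (Minv Gl) := map_sub cL _ _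
      have hherm := hconj Gl lam
      have e1 : lam (cL (Minv (lam - Gl))) = lam (cL (Minv lam)) - lam (cL (Minv Gl)) := by
        rw [hMinvF, hcLF, map_sub]
      have e2 : (lam - Gl) (cL (Minv (lam - Gl)))
          = lam (cL (Minv lam)) - lam (cL (Minv Gl)) - Gl (cL (Minv lam)) + Gl (cL (Minv Gl)) := by
        rw [hMinvF, hcLF]
        simp only [ContinuousLinearMap.sub_apply, map_sub]
        ring
      unfold sqMinv
      rw [e1, e2, hherm]
      simp only [Complex.sub_re, Complex.add_re, Complex.star_def, Complex.conj_re]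
      ring
    have h1 := hmain lam
    rw [hFlam] at h1
    linarith only [hid, hGle, h1]
end
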